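/- Consider the linearized ADMM setting with variables x^k, x^{k+1} ∈ ℝ^p, y^{k−1}, y^k, y^{k+1} ∈ ℝ^q, γ^{k−1}, γ^k, γ^{k+1} ∈ ℝ^n, matrices A ∈ ℝ^{n×p}, B ∈ ℝ^{n×q} where B has full column rank and Im(A) ⊆ Im(B), functions g : ℝ^p × ℝ^q → ℝ (L_g-Lipschitz differentiable), f : ℝ^p → ℝ, h : ℝ^q → ℝ (L_h-Lipschitz differentiable), and constants L_y > 0, β > 0. Suppose ∇h̄^{k−1}(y^k) = 0 and ∇h̄^k(y^{k+1}) = 0 (as holds when y^k, y^{k+1} are the y-update minimizers), γ^k = γ^{k−1} + β(Ax^k + By^k), and γ^{k+1} = γ^k + β(Ax^{k+1} + By^{k+1}). Then L_β(x^{k+1}, y^{k+1}, γ^{k+1}) − L_β(x^{k+1}, y^{k+1}, γ^k) = (1/β)‖γ^{k+1} − γ^k‖² ≤ C2‖x^{k+1} − x^k‖² + C3‖y^{k+1} − y^k‖² + C4‖y^k − y^{k−1}‖², where L_w = L_g + L_h, C2 = 3L_w²/(β λ_{BᵀB}), C3 = 3L_y²/(β λ_{BᵀB}), C4 = 3(L_w²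 + L_y²)/(β λ_{BᵀB}), and λ_{BᵀB} is the smallest eigenvalue of BᵀB. -/

import Mathlib

open Matrix Filter
open scoped RealInnerProductSpace

set_option maxHeartbeats 1000000
noncomputable section

abbrev Vec (m : ℕ) := EuclideanSpace ℝ (Fin m)

def mv {m l : ℕ} (M : Matrix (Fin m) (Fin l) ℝ) (v : Vec l) : Vec m := WithLp.toLp 2 (M.mulVec v)

def gradx {p q : ℕ} (g : Vec p → Vec q → ℝ) (x : Vec p) (y : Vec q) : Vec p :=
  gradient (fun x' => g x' y) x

def grady {p q : ℕ} (g : Vec p → Vec q → ℝ) (x : Vec p) (y : Vec q) : Vec q :=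
  gradient (g x) y

def LipschitzDifferentiable {m : ℕ} (h : Vec m → ℝ) (L : ℝ) : Prop :=
  Differentiable ℝ h ∧ ∀ y y' : Vec m, ‖gradient h y - gradient h y'‖ ≤ L * ‖y - y'‖

def LipschitzDifferentiable2 {p q : ℕ} (g : Vec p → Vec q → ℝ) (L : ℝ) : Prop :=
  (∀ y, Differentiable ℝ fun x => g x y) ∧ (∀ x, Differentiable ℝ (g x)) ∧
    ∀ x x' : Vec p, ∀ y y' : Vec q,
      Real.sqrt (‖gradx g x y - gradx g x' y'‖ ^ 2 + ‖grady g x y - grady g x' y'‖ ^ 2) ≤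
        L * Real.sqrt (‖x - x'‖ ^ 2 + ‖y - y'‖ ^ 2)

def Lagr {p q n : ℕ} (β : ℝ) (g : Vec p → Vec q → ℝ) (f : Vec p → ℝ) (h : Vec q → ℝ)
    (A : Matrix (Fin n) (Fin p) ℝ) (B : Matrix (Fin n) (Fin q) ℝ)
    (x : Vec p) (y : Vec q) (γ : Vec n) : ℝ :=
  g x y + f x + h y + ⟪γ, mv A x + mv B y⟫ + β / 2 * ‖mv A x + mv B y‖ ^ 2

def fbar {p q n : ℕ} (f : Vec p → ℝ) (g : Vec p → Vec q → ℝ)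
    (A : Matrix (Fin n) (Fin p) ℝ) (B : Matrix (Fin n) (Fin q) ℝ) (β Lx : ℝ)
    (xk : Vec p) (yk : Vec q) (γk : Vec n) (x : Vec p) : ℝ :=
  f x + ⟪γk, mv A x⟫ + Lx / 2 * ‖x - xk‖ ^ 2 +
    ⟪x - xk, gradx g xk yk + β • mv Aᵀ (mv A xk + mv B yk)⟫

def hbar {p q n : ℕ} (g : Vec p → Vec q → ℝ) (h : Vec q → ℝ)
    (A : Matrix (Fin n) (Fin p) ℝ) (B : Matrix (Fin n) (Fin q) ℝ) (β Ly : ℝ)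
    (xk1 : Vec p) (yk : Vec q) (γk : Vec n) (y : Vec q) : ℝ :=
  ⟪γk, mv B y⟫ + Ly / 2 * ‖y - yk‖ ^ 2 + β / 2 * ‖mv A xk1 + mv B y‖ ^ 2 +
    ⟪y - yk, grady g xk1 yk + gradient h yk⟫

def IsSmallestEigenvalue {m : ℕ} (M : Matrix (Fin m) (Fin m) ℝ) (lam : ℝ) : Prop :=
  (∃ v : Fin m → ℝ, v ≠ 0 ∧ M.mulVec v = lam • v) ∧
    ∀ μ : ℝ, (∃ v : Fin m → ℝ, v ≠ 0 ∧ M.mulVec v = μ • v) → lam ≤ μ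

def IsLargestEigenvalue {m : ℕ} (M : Matrix (Fin m) (Fin m) ℝ) (lam : ℝ) : Prop :=
  (∃ v : Fin m → ℝ, v ≠ 0 ∧ M.mulVec v = lam • v) ∧
    ∀ μ : ℝ, (∃ v : Fin m → ℝ, v ≠ 0 ∧ M.mulVec v = μ • v) → μ ≤ lam

def RegularSubgradientAt {m : ℕ} (f : Vec m → ℝ) (x₀ v : Vec m) : Prop :=
  ∀ ε > 0, ∀ᶠ x in nhds x₀, f x₀ + ⟪v, x - x₀⟫ - ε * ‖x - x₀‖ ≤ f x

/- ### Auxiliary lemmas -/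

def mvL {a b : ℕ} (M : Matrix (Fin a) (Fin b) ℝ) : Vec b →L[ℝ] Vec a :=
  LinearMap.toContinuousLinearMap
    { toFun := mv M, map_add' := fun u v => by simp [mv, Matrix.mulVec_add],
      map_smul' := fun c u => by simp [mv, Matrix.mulVec_smul] }

@[simp] lemma mvL_apply {a b : ℕ} (M : Matrix (Fin a) (Fin b) ℝ) (v : Vec b) :
    mvL M v = mv M v := rfl

lemma mv_add {a b : ℕ} (M : Matrix (Fin a) (Fin b) ℝ) (u v : Vec b) :
    mv M (u + v) = mv M u + mv M v := by simp [mv, Matrix.mulVec_add]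

lemma mv_smul {a b : ℕ} (M : Matrix (Fin a) (Fin b) ℝ) (c : ℝ) (u : Vec b) :
    mv M (c • u) = c • mv M u := by simp [mv, Matrix.mulVec_smul]

lemma mv_sub {a b : ℕ} (M : Matrix (Fin a) (Fin b) ℝ) (u v : Vec b) :
    mv M (u - v) = mv M u - mv M v := by simp [mv, Matrix.mulVec_sub]

lemma inner_mv {a b : ℕ} (M : Matrix (Fin a) (Fin b) ℝ) (u : Vec a) (w : Vec b) :
    ⟪u, mv M w⟫ = ⟪mv Mᵀ u, w⟫ := by
  simp only [mv, PiLp.inner_apply, RCLike.inner_apply, conj_trivial]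
  have h1 : ∑ i, (M *ᵥ w) i * u i = (M *ᵥ w) ⬝ᵥ u := rfl
  have h2 : ∑ i, w i * (Mᵀ *ᵥ u) i = w ⬝ᵥ (Mᵀ *ᵥ u) := rfl
  rw [h1, h2, dotProduct_comm, Matrix.dotProduct_mulVec, Matrix.mulVec_transpose,
    dotProduct_comm]

lemma hbar_grad {p q n : ℕ} (g : Vec p → Vec q → ℝ) (h : Vec q → ℝ)
    (A : Matrix (Fin n) (Fin p) ℝ) (B : Matrix (Fin n) (Fin q) ℝ) (β Ly : ℝ)
    (x1 : Vec p) (y0 : Vec q) (γ : Vec n) (y : Vec q) :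
    HasGradientAt (hbar g h A B β Ly x1 y0 γ)
      (mv Bᵀ γ + Ly • (y - y0) + β • mv Bᵀ (mv A x1 + mv B y)
        + (grady g x1 y0 + gradient h y0)) y := by
  set d := grady g x1 y0 + gradient h y0 with hd
  set c := mv A x1 with hc
  have hfun : hbar g h A B β Ly x1 y0 γ = fun y' : Vec q =>
      ⟪γ, mv B y'⟫ + Ly / 2 * ⟪y' - y0, y' - y0⟫
        + β / 2 * ⟪c + mv B y', c + mv B y'⟫ + ⟪y' - y0, d⟫ := by
    funext y'
    simp only [hbar, real_inner_self_eq_norm_sq, hc, hd]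
  rw [hfun, hasGradientAt_iff_hasFDerivAt]
  have h1 : HasFDerivAt (fun y' : Vec q => ⟪γ, mv B y'⟫) ((innerSL ℝ γ).comp (mvL B)) y :=
    ((innerSL ℝ γ).comp (mvL B)).hasFDerivAt
  have h2 := (((hasFDerivAt_id y).sub_const y0).inner ℝ
    ((hasFDerivAt_id y).sub_const y0)).const_mul (Ly / 2)
  have hB : HasFDerivAt (fun y' : Vec q => c + mv B y') (mvL B) y := by
    simpa using ((mvL B).hasFDerivAt (x := y)).const_add c
  have h3 := (hB.inner ℝ hB).const_mul (β / 2)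
  have h4 := ((hasFDerivAt_id y).sub_const y0).inner ℝ (hasFDerivAt_const d y)
  have H := ((h1.add h2).add h3).add h4
  refine H.congr_fderiv ?_
  ext w
  simp only [InnerProductSpace.toDual_apply_apply, ContinuousLinearMap.add_apply,
    ContinuousLinearMap.coe_comp', Function.comp_apply, ContinuousLinearMap.smul_apply,
    ContinuousLinearMap.prod_apply, ContinuousLinearMap.coe_id', id_eq,
    fderivInnerCLM_apply, innerSL_apply_apply, mvL_apply, ContinuousLinearMap.zero_apply,
    smul_eq_mul]
  simp only [mv_add, inner_add_left, inner_add_right, real_inner_smul_left, inner_zero_right]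
  rw [← inner_mv B γ w, ← inner_mv B c w, ← inner_mv B (mv B y) w]
  rw [real_inner_comm w (y - y0), real_inner_comm (mv B w) c, real_inner_comm (mv B w) (mv B y),
    real_inner_comm w d]
  ring

lemma rayleigh_lower {m : ℕ} {M : Matrix (Fin m) (Fin m) ℝ} (hM : M.IsHermitian) {lam : ℝ}
    (hs : IsSmallestEigenvalue M lam) (z : Vec m) : lam * ‖z‖ ^ 2 ≤ ⟪z, mv M z⟫ := by
  classical
  set b := hM.eigenvectorBasis with hb
  have hmu : ∀ i, lam ≤ hM.eigenvalues i := by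
    intro i
    refine hs.2 _ ⟨b i, ?_, hM.mulVec_eigenvectorBasis i⟩
    intro h0
    have : ‖b i‖ = 1 := b.orthonormal.1 i
    rw [show (b i : Vec m) = 0 from WithLp.ofLp_injective 2 h0] at this
    simp at this
  have hrepr : ∀ (w : Vec m), ⟪z, w⟫ = ∑ i, b.repr z i * b.repr w i := by
    intro w
    rw [← b.repr.inner_map_map z w]
    simp only [PiLp.inner_apply, RCLike.inner_apply, conj_trivial]
    exact Finset.sum_congr rfl (fun _ _ => mul_comm _ _)
  have hMz : ∀ i, b.repr (mv M z) i = hM.eigenvalues i * b.repr z i := by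
    intro i
    rw [b.repr_apply_apply, b.repr_apply_apply]
    have hsym : Mᵀ = M := hM
    rw [inner_mv, hsym]
    have hbi : mv M (b i) = hM.eigenvalues i • (b i : Vec m) := by
      rw [mv, hM.mulVec_eigenvectorBasis i]; rfl
    rw [hbi, real_inner_smul_left]
  have hnorm : ‖z‖ ^ 2 = ∑ i, b.repr z i * b.repr z i := by
    rw [← real_inner_self_eq_norm_sq, hrepr z]
  rw [hrepr (mv M z), hnorm, Finset.mul_sum]
  apply Finset.sum_le_sum
  intro i _
  rw [hMz i]
  have h := mul_le_mul_of_nonneg_right (hmu i) (mul_self_nonneg (b.repr z i))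
  nlinarith [h]

lemma mulVec_inj_of_rank {q n : ℕ} {B : Matrix (Fin n) (Fin q) ℝ} (hrank : B.rank = q) :
    Function.Injective (B.mulVec) := by
  have h := LinearMap.finrank_range_add_finrank_ker (B.mulVecLin)
  rw [show Module.finrank ℝ (LinearMap.range B.mulVecLin) = B.rank from rfl, hrank] at h
  simp [Module.finrank_pi] at h
  have := LinearMap.ker_eq_bot.mp h
  exact this

lemma lam_pos {q n : ℕ} {B : Matrix (Fin n) (Fin q) ℝ} (hrank : B.rank = q) {lam : ℝ}
    (hs : IsSmallestEigenvalue (Bᵀ * B) lam) : 0 < lam := by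
  obtain ⟨v, hv0, hv⟩ := hs.1
  have hinj := mulVec_inj_of_rank hrank
  set vq : Vec q := WithLp.toLp 2 v with hvq
  have hBv : mv B vq ≠ 0 := by
    intro h0
    apply hv0
    apply hinj
    rw [Matrix.mulVec_zero]
    exact congrArg (WithLp.ofLp (p := 2)) h0
  have h1 : ⟪vq, mv (Bᵀ * B) vq⟫ = ‖mv B vq‖ ^ 2 := by
    rw [show mv (Bᵀ * B) vq = mv Bᵀ (mv B vq) by simp [mv, Matrix.mulVec_mulVec],
      inner_mv, Matrix.transpose_transpose, real_inner_self_eq_norm_sq]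
  have h2 : ⟪vq, mv (Bᵀ * B) vq⟫ = lam * ‖vq‖ ^ 2 := by
    rw [show mv (Bᵀ * B) vq = lam • vq by simp [mv, hvq, hv], real_inner_smul_right,
      real_inner_self_eq_norm_sq]
  have hBpos : 0 < ‖mv B vq‖ ^ 2 := by
    have : ‖mv B vq‖ ≠ 0 := norm_ne_zero_iff.mpr hBv
    positivity
  have hvpos : 0 < ‖vq‖ ^ 2 := by
    have hne : vq ≠ 0 := fun h0 => hv0 (congrArg (WithLp.ofLp (p := 2)) h0)
    have : ‖vq‖ ≠ 0 := norm_ne_zero_iff.mpr hne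
    positivity
  nlinarith [h1, h2, hBpos, hvpos]

lemma range_bound {q n : ℕ} {B : Matrix (Fin n) (Fin q) ℝ} (hrank : B.rank = q) {lam : ℝ}
    (hs : IsSmallestEigenvalue (Bᵀ * B) lam) (z : Vec q) :
    lam * ‖mv B z‖ ^ 2 ≤ ‖mv Bᵀ (mv B z)‖ ^ 2 := by
  have hlam := lam_pos hrank hs
  set u := mv B z with hu
  set w := mv Bᵀ u with hw
  have h1 : ⟪z, w⟫ = ‖u‖ ^ 2 := by
    rw [hw, inner_mv, Matrix.transpose_transpose, ← hu, real_inner_self_eq_norm_sq]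
  have h2 : lam * ‖z‖ ^ 2 ≤ ‖u‖ ^ 2 := by
    have hthis := rayleigh_lower (M := Bᵀ * B)
      (show (Bᵀ * B).IsHermitian from Matrix.isHermitian_conjTranspose_mul_self B) hs z
    rw [show mv (Bᵀ * B) z = w by rw [hw, hu]; simp [mv, Matrix.mulVec_mulVec], h1] at hthis
    exact hthis
  have hCS : ⟪z, w⟫ ≤ ‖z‖ * ‖w‖ := real_inner_le_norm z w
  have h3 : ‖u‖ ^ 2 ≤ ‖z‖ * ‖w‖ := h1 ▸ hCS
  by_cases hu0 : ‖u‖ = 0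
  · have hz : ‖u‖ ^ 2 = 0 := by rw [hu0]; ring
    rw [hz, mul_zero]
    positivity
  · have ha : 0 < ‖u‖ ^ 2 := by
      have := norm_nonneg u
      positivity
    have h4 : ‖u‖ ^ 2 * ‖u‖ ^ 2 ≤ (‖z‖ * ‖w‖) * (‖z‖ * ‖w‖) :=
      mul_le_mul h3 h3 (le_of_lt ha) (by positivity)
    have h5 : lam * ‖z‖ ^ 2 * ‖w‖ ^ 2 ≤ ‖u‖ ^ 2 * ‖w‖ ^ 2 :=
      mul_le_mul_of_nonneg_right h2 (sq_nonneg _)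
    nlinarith [h4, h5, ha, hlam, sq_nonneg ‖w‖, sq_nonneg ‖z‖]

theorem statement6 {p q n : ℕ}
    (A : Matrix (Fin n) (Fin p) ℝ) (B : Matrix (Fin n) (Fin q) ℝ)
    (hrank : B.rank = q) (himg : Set.range (mv A) ⊆ Set.range (mv B))
    (g : Vec p → Vec q → ℝ) (f : Vec p → ℝ) (h : Vec q → ℝ)
    (Lg Lh : ℝ) (hg : LipschitzDifferentiable2 g Lg) (hh : LipschitzDifferentiable h Lh)
    (Ly β lamB : ℝ) (hLy : 0 < Ly) (hβ : 0 < β)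
    (hlamB : IsSmallestEigenvalue (Bᵀ * B) lamB)
    (xk xk1 : Vec p) (ykm1 yk yk1 : Vec q) (γkm1 γk γk1 : Vec n)
    (hstatk : gradient (hbar g h A B β Ly xk ykm1 γkm1) yk = 0)
    (hstatk1 : gradient (hbar g h A B β Ly xk1 yk γk) yk1 = 0)
    (hγk : γk = γkm1 + β • (mv A xk + mv B yk))
    (hγk1 : γk1 = γk + β • (mv A xk1 + mv B yk1)) :
    Lagr β g f h A B xk1 yk1 γk1 - Lagr β g f h A B xk1 yk1 γk =
      1 / β * ‖γk1 - γk‖ ^ 2 ∧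
    1 / β * ‖γk1 - γk‖ ^ 2 ≤
      3 * (Lg + Lh) ^ 2 / (β * lamB) * ‖xk1 - xk‖ ^ 2 +
      3 * Ly ^ 2 / (β * lamB) * ‖yk1 - yk‖ ^ 2 +
      3 * ((Lg + Lh) ^ 2 + Ly ^ 2) / (β * lamB) * ‖yk - ykm1‖ ^ 2 := by
  have hlampos := lam_pos hrank hlamB
  set v1 : Vec n := mv A xk1 + mv B yk1 with hv1
  have hdd : γk1 - γk = β • v1 := by rw [hγk1, add_sub_cancel_left]
  -- Part 1
  have part1 : Lagr β g f h A B xk1 yk1 γk1 - Lagr β g f h A B xk1 yk1 γk =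
      1 / β * ‖γk1 - γk‖ ^ 2 := by
    have e1 : Lagr β g f h A B xk1 yk1 γk1 - Lagr β g f h A B xk1 yk1 γk
        = ⟪γk1 - γk, v1⟫ := by
      simp only [Lagr, inner_sub_left, hv1]
      ring
    have e2 : ⟪γk1 - γk, v1⟫ = β * ‖v1‖ ^ 2 := by
      rw [hdd, real_inner_smul_left, real_inner_self_eq_norm_sq]
    have e3 : 1 / β * ‖γk1 - γk‖ ^ 2 = β * ‖v1‖ ^ 2 := by
      rw [hdd, norm_smul, Real.norm_eq_abs, abs_of_pos hβ, mul_pow]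
      field_simp
    rw [e1, e2, e3]
  refine ⟨part1, ?_⟩
  -- Part 2 : stationarity identities
  have H1 := (hbar_grad g h A B β Ly xk1 yk γk yk1).gradient
  have H0 := (hbar_grad g h A B β Ly xk ykm1 γkm1 yk).gradient
  have E1 : mv Bᵀ γk + Ly • (yk1 - yk) + β • mv Bᵀ (mv A xk1 + mv B yk1)
      + (grady g xk1 yk + gradient h yk) = 0 := H1.symm.trans hstatk1
  have E0 : mv Bᵀ γkm1 + Ly • (yk - ykm1) + β • mv Bᵀ (mv A xk + mv B yk)
      + (grady g xk ykm1 + gradient h ykm1) = 0 := H0.symm.trans hstatk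
  have hBγ1 : mv Bᵀ γk1 = mv Bᵀ γk + β • mv Bᵀ (mv A xk1 + mv B yk1) := by
    rw [hγk1, mv_add, mv_smul]
  have hBγ0 : mv Bᵀ γk = mv Bᵀ γkm1 + β • mv Bᵀ (mv A xk + mv B yk) := by
    rw [hγk, mv_add, mv_smul]
  have F1 : mv Bᵀ γk1 + (Ly • (yk1 - yk) + (grady g xk1 yk + gradient h yk)) = 0 := by
    have key : mv Bᵀ γk1 + (Ly • (yk1 - yk) + (grady g xk1 yk + gradient h yk))
        = mv Bᵀ γk + Ly • (yk1 - yk) + β • mv Bᵀ (mv A xk1 + mv B yk1)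
          + (grady g xk1 yk + gradient h yk) := by
      rw [hBγ1]; module
    exact key.trans E1
  have F0 : mv Bᵀ γk + (Ly • (yk - ykm1) + (grady g xk ykm1 + gradient h ykm1)) = 0 := by
    have key : mv Bᵀ γk + (Ly • (yk - ykm1) + (grady g xk ykm1 + gradient h ykm1))
        = mv Bᵀ γkm1 + Ly • (yk - ykm1) + β • mv Bᵀ (mv A xk + mv B yk)
          + (grady g xk ykm1 + gradient h ykm1) := by
      rw [hBγ0]; module
    exact key.trans E0
  set Δg : Vec q := grady g xk1 yk - grady g xk ykm1 with hΔg
  set Δh : Vec q := gradient h yk - gradient h ykm1 with hΔh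
  have hT : mv Bᵀ (γk1 - γk) = -(Ly • (yk1 - yk)) + Ly • (yk - ykm1) - (Δg + Δh) := by
    rw [mv_sub, eq_neg_of_add_eq_zero_left F1, eq_neg_of_add_eq_zero_left F0, hΔg, hΔh]
    module
  -- norms
  set X := ‖xk1 - xk‖ with hX
  set Y := ‖yk1 - yk‖ with hY
  set Z := ‖yk - ykm1‖ with hZ
  set s := Real.sqrt (X ^ 2 + Z ^ 2) with hs
  have hs0 : 0 ≤ s := Real.sqrt_nonneg _
  have hs2 : s ^ 2 = X ^ 2 + Z ^ 2 := Real.sq_sqrt (by positivity)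
  have hq : 0 < q := by
    obtain ⟨v, hv0, -⟩ := hlamB.1
    rcases Nat.eq_zero_or_pos q with hq0 | hq0
    · subst hq0
      exact absurd (Subsingleton.elim v 0) hv0
    · exact hq0
  have hLh0 : 0 ≤ Lh := by
    set e : Vec q := EuclideanSpace.single ⟨0, hq⟩ (1 : ℝ) with he
    have h1 := hh.2 e 0
    rw [sub_zero] at h1
    have hne : ‖e‖ = 1 := by rw [he, EuclideanSpace.norm_single]; norm_num
    rw [hne, mul_one] at h1
    exact le_trans (norm_nonneg _) h1
  have hΔgb : ‖Δg‖ ≤ Lg * s := by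
    have h1 := hg.2.2 xk1 xk yk ykm1
    have h2 : ‖Δg‖ ≤ Real.sqrt (‖gradx g xk1 yk - gradx g xk ykm1‖ ^ 2 + ‖Δg‖ ^ 2) :=
      Real.le_sqrt_of_sq_le (le_add_of_nonneg_left (sq_nonneg _))
    exact h2.trans h1
  have hZs : Z ≤ s :=
    Real.le_sqrt_of_sq_le (le_add_of_nonneg_left (sq_nonneg X))
  have hΔhb : ‖Δh‖ ≤ Lh * s := by
    have h1 := hh.2 yk ykm1
    exact h1.trans (mul_le_mul_of_nonneg_left hZs hLh0)
  have hcb : ‖Δg + Δh‖ ≤ (Lg + Lh) * s := by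
    calc ‖Δg + Δh‖ ≤ ‖Δg‖ + ‖Δh‖ := norm_add_le _ _
      _ ≤ Lg * s + Lh * s := add_le_add hΔgb hΔhb
      _ = (Lg + Lh) * s := by ring
  have hTn : ‖mv Bᵀ (γk1 - γk)‖ ≤ Ly * Y + Ly * Z + (Lg + Lh) * s := by
    rw [hT]
    calc ‖-(Ly • (yk1 - yk)) + Ly • (yk - ykm1) - (Δg + Δh)‖
        ≤ ‖-(Ly • (yk1 - yk)) + Ly • (yk - ykm1)‖ + ‖Δg + Δh‖ := norm_sub_le _ _
      _ ≤ ‖-(Ly • (yk1 - yk))‖ + ‖Ly • (yk - ykm1)‖ + ‖Δg + Δh‖ := by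
          gcongr
          exact norm_add_le _ _
      _ = Ly * Y + Ly * Z + ‖Δg + Δh‖ := by
          rw [norm_neg, norm_smul, norm_smul, Real.norm_eq_abs, abs_of_pos hLy]
      _ ≤ Ly * Y + Ly * Z + (Lg + Lh) * s := by gcongr
  have hT2 : ‖mv Bᵀ (γk1 - γk)‖ ^ 2
      ≤ 3 * ((Lg + Lh) ^ 2 * X ^ 2 + Ly ^ 2 * Y ^ 2 + ((Lg + Lh) ^ 2 + Ly ^ 2) * Z ^ 2) := by
    have hn0 : (0:ℝ) ≤ ‖mv Bᵀ (γk1 - γk)‖ := norm_nonneg _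
    have hsq : ‖mv Bᵀ (γk1 - γk)‖ ^ 2 ≤ (Ly * Y + Ly * Z + (Lg + Lh) * s) ^ 2 :=
      pow_le_pow_left₀ hn0 hTn 2
    refine hsq.trans ?_
    have habc : ∀ a b c : ℝ, (a + b + c) ^ 2 ≤ 3 * (a ^ 2 + b ^ 2 + c ^ 2) := by
      intro a b c
      nlinarith [sq_nonneg (a - b), sq_nonneg (a - c), sq_nonneg (b - c)]
    refine (habc (Ly * Y) (Ly * Z) ((Lg + Lh) * s)).trans ?_
    rw [mul_pow, mul_pow, mul_pow, hs2]
    ring_nf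
    nlinarith [le_refl (0:ℝ)]
  -- range of B
  have hrange : lamB * ‖γk1 - γk‖ ^ 2 ≤ ‖mv Bᵀ (γk1 - γk)‖ ^ 2 := by
    obtain ⟨z0, hz0⟩ := himg ⟨xk1, rfl⟩
    have hd2 : γk1 - γk = mv B (β • (z0 + yk1)) := by
      rw [mv_smul, mv_add, hz0, hdd, hv1]
    rw [hd2]
    exact range_bound hrank hlamB _
  have hbl : 0 < β * lamB := mul_pos hβ hlampos
  calc 1 / β * ‖γk1 - γk‖ ^ 2 = (lamB * ‖γk1 - γk‖ ^ 2) / (β * lamB) := by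
        field_simp
    _ ≤ (3 * ((Lg + Lh) ^ 2 * X ^ 2 + Ly ^ 2 * Y ^ 2 + ((Lg + Lh) ^ 2 + Ly ^ 2) * Z ^ 2))
          / (β * lamB) := by
        apply div_le_div_of_nonneg_right ?_ hbl.le |>.trans_eq rfl
        exact hrange.trans hT2
    _ = 3 * (Lg + Lh) ^ 2 / (β * lamB) * X ^ 2 + 3 * Ly ^ 2 / (β * lamB) * Y ^ 2 +
          3 * ((Lg + Lh) ^ 2 + Ly ^ 2) / (β * lamB) * Z ^ 2 := by
        field_simp
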